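/- Let r = [a₁,a₂]·[a₃,a₄]⁻¹ ∈ F, where [x,y] = x·y·x⁻¹·y⁻¹. For every quadruple ε = (ε₁, ε₂, ε₃, ε₄) with each εᵢ ∈ {+1, −1} and every integer n, the element Φ_{ε,n}(r) is conjugate in F to r; hence Φ_{ε,n} maps the normal closure of {r} to itself and descends to an automorphism of the genus-two surface group F/⟨⟨r⟩⟩. -/

import Mathlib

/-! `F` is the free group on four generators `a₁, a₂, a₃, a₄`;
here `a 0 = a₁`, `a 1 = a₂`, `a 2 = a₃`, `a 3 = a₄`. -/

abbrev F : Type := FreeGroup (Fin 4)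

def a (i : Fin 4) : F := FreeGroup.of i

/-- `Δ i ε` is the endomorphism `Δ_{i+1}^ε` of `F` induced by the `ε`-th power of the
Dehn twist `D_{i+1}` (the index is shifted by one): `Δ 0 ε = Δ₁^ε`, …, `Δ 4 ε = Δ₅^ε`. -/
def Δ : Fin 5 → ℤ → (F →* F) := fun i ε =>
  FreeGroup.lift (![
    ![a 0, a 1 * a 0 ^ ε, a 2, a 3],
    ![a 0 * a 1 ^ (-ε), a 1, a 2, a 3],
    ![a 0, ((a 2)⁻¹ * a 0) ^ ε * a 1, a 2, ((a 2)⁻¹ * a 0) ^ ε * a 3],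
    ![a 0, a 1, a 2 * a 3 ^ ε, a 3],
    ![a 0, a 1, a 2, a 3 * a 2 ^ (-ε)]] i)

lemma Δ_inv_comp (i : Fin 5) (ε : ℤ) :
    (Δ i (-ε)).comp (Δ i ε) = MonoidHom.id F := by
  apply FreeGroup.ext_hom
  intro j
  fin_cases i <;> fin_cases j <;>
    simp [Δ, a, MonoidHom.comp_apply]

/-- `Δ i ε` as an automorphism of `F` (its inverse is `Δ i (-ε)`). -/
def Δaut (i : Fin 5) (ε : ℤ) : F ≃* F where
  toFun := Δ i ε
  invFun := Δ i (-ε)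
  left_inv := fun x => by
    simpa using congrArg (fun f : F →* F => f x) (Δ_inv_comp i ε)
  right_inv := fun x => by
    have h := congrArg (fun f : F →* F => f x) (Δ_inv_comp i (-ε))
    rw [neg_neg] at h
    simpa using h
  map_mul' := map_mul _

/-- The automorphism `Φ_{ε,n} = Δ₂^{ε₂} ∘ Δ₁^{ε₁} ∘ Δ₃^{ε₃} ∘ Δ₄^{ε₄} ∘ (Δ₅^{+1})^n` of `F`
(multiplication of automorphisms is composition). -/
def Φ (ε₁ ε₂ ε₃ ε₄ n : ℤ) : F ≃* F :=
  Δaut 1 ε₂ * Δaut 0 ε₁ * Δaut 2 ε₃ * Δaut 3 ε₄ * (Δaut 4 1) ^ n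

/-- The surface relator `r = [a₁,a₂]·[a₃,a₄]⁻¹`. -/
def r : F := (a 0 * a 1 * (a 0)⁻¹ * (a 1)⁻¹) * (a 2 * a 3 * (a 2)⁻¹ * (a 3)⁻¹)⁻¹

/-- `Φ_{ε,n}` sends the surface relator `r` to a conjugate of `r`; in particular it
preserves the normal closure of `{r}` and descends to an automorphism of the genus-two
surface group `F/⟨⟨r⟩⟩`. -/

lemma delta_fix (i : Fin 5) (ε : ℤ) (hi : i ≠ 2) : Δ i ε r = r := by
  fin_cases i
  · simp [Δ, r, a]; group
  · simp [Δ, r, a]; group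
  · exact absurd rfl hi
  · simp [Δ, r, a]; group
  · simp [Δ, r, a]; group

lemma delta2_conj (ε : ℤ) (h : ε = 1 ∨ ε = -1) : ∃ g : F, Δ 2 ε r = g * r * g⁻¹ := by
  rcases h with h | h <;> subst h
  · exact ⟨a 0 * (a 2)⁻¹, by simp [Δ, r, a]; group⟩
  · exact ⟨a 2 * (a 0)⁻¹, by simp [Δ, r, a]; group⟩

lemma delta_conj (i : Fin 5) (ε : ℤ) (h : ε = 1 ∨ ε = -1) :
    ∃ g : F, Δaut i ε r = g * r * g⁻¹ := by
  by_cases hi : i = 2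
  · subst hi; exact delta2_conj ε h
  · exact ⟨1, by simp [Δaut, delta_fix i ε hi]⟩

lemma daut4_pow_fix (n : ℤ) : ((Δaut 4 1) ^ n) r = r := by
  have h1 : ∀ x : F, Δaut 4 1 x = x → ((Δaut 4 1)) x = x := fun x h => h
  have base : Δaut 4 1 r = r := delta_fix 4 1 (by decide)
  have symm : (Δaut 4 1).symm r = r := by
    conv_lhs => rw [← base]
    exact (Δaut 4 1).symm_apply_apply r
  induction n using Int.induction_on with
  | zero => rfl
  | succ k ih =>
      rw [zpow_add_one]
      show ((Δaut 4 1) ^ (k : ℤ)) (Δaut 4 1 r) = r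
      rw [base, ih]
  | pred k ih =>
      rw [zpow_sub_one]
      show ((Δaut 4 1) ^ (-(k : ℤ))) ((Δaut 4 1)⁻¹ r) = r
      have : (Δaut 4 1)⁻¹ r = (Δaut 4 1).symm r := rfl
      rw [this, symm, ih]

set_option linter.unusedVariables false in
lemma phi_conj (ε₁ ε₂ ε₃ ε₄ : ℤ)
    (h₁ : ε₁ = 1 ∨ ε₁ = -1) (h₂ : ε₂ = 1 ∨ ε₂ = -1)
    (h₃ : ε₃ = 1 ∨ ε₃ = -1) (h₄ : ε₄ = 1 ∨ ε₄ = -1) (n : ℤ) :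
    ∃ g : F, Φ ε₁ ε₂ ε₃ ε₄ n r = g * r * g⁻¹ := by
  have step : Φ ε₁ ε₂ ε₃ ε₄ n r
      = Δaut 1 ε₂ (Δaut 0 ε₁ (Δaut 2 ε₃ (Δaut 3 ε₄ (((Δaut 4 1) ^ n) r)))) := rfl
  rw [step, daut4_pow_fix]
  obtain ⟨g4, hg4⟩ := delta_conj 3 ε₄ h₄
  rw [hg4]
  obtain ⟨g2, hg2⟩ := delta_conj 2 ε₃ h₃
  refine ⟨Δaut 1 ε₂ (Δaut 0 ε₁ ((Δaut 2 ε₃ g4) * g2)), ?_⟩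
  have e2 : Δaut 2 ε₃ (g4 * r * g4⁻¹)
      = (Δaut 2 ε₃ g4 * g2) * r * (Δaut 2 ε₃ g4 * g2)⁻¹ := by
    simp only [map_mul, map_inv, hg2]; group
  rw [e2]
  have fix0 : Δaut 0 ε₁ r = r := delta_fix 0 ε₁ (by decide)
  have fix1 : Δaut 1 ε₂ r = r := delta_fix 1 ε₂ (by decide)
  simp only [map_mul, map_inv, fix0, fix1]

theorem phi_preserves_relator (ε₁ ε₂ ε₃ ε₄ : ℤ)
    (h₁ : ε₁ = 1 ∨ ε₁ = -1) (h₂ : ε₂ = 1 ∨ ε₂ = -1)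
    (h₃ : ε₃ = 1 ∨ ε₃ = -1) (h₄ : ε₄ = 1 ∨ ε₄ = -1) (n : ℤ) :
    IsConj r (Φ ε₁ ε₂ ε₃ ε₄ n r) ∧
    (∀ x ∈ Subgroup.normalClosure {r},
      Φ ε₁ ε₂ ε₃ ε₄ n x ∈ Subgroup.normalClosure {r}) ∧
    ∃ ψ : (F ⧸ Subgroup.normalClosure {r}) ≃* (F ⧸ Subgroup.normalClosure {r}),
      ∀ x : F, ψ (QuotientGroup.mk x) = QuotientGroup.mk (Φ ε₁ ε₂ ε₃ ε₄ n x) := by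
  obtain ⟨g, hg⟩ := phi_conj ε₁ ε₂ ε₃ ε₄ h₁ h₂ h₃ h₄ n
  have hconj : IsConj r (Φ ε₁ ε₂ ε₃ ε₄ n r) := by
    rw [hg]; exact (isConj_iff.mpr ⟨g, rfl⟩)
  -- membership
  set N := Subgroup.normalClosure ({r} : Set F) with hN
  have hrN : r ∈ N := Subgroup.subset_normalClosure (Set.mem_singleton r)
  have key : ∀ (e : F ≃* F), (∃ g : F, e r = g * r * g⁻¹) →
      ∀ x ∈ N, e x ∈ N := by
    intro e ⟨g, hg⟩ x hx
    have hle : N ≤ N.comap e.toMonoidHom := by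
      apply Subgroup.normalClosure_le_normal
      intro y hy
      rw [Set.mem_singleton_iff] at hy
      subst hy
      show e r ∈ N
      rw [hg]
      exact Subgroup.normalClosure_normal.conj_mem r hrN g
    exact hle hx
  have fwd : ∀ x ∈ N, Φ ε₁ ε₂ ε₃ ε₄ n x ∈ N := key _ ⟨g, hg⟩
  -- inverse also preserves N
  have bwd : ∀ x ∈ N, (Φ ε₁ ε₂ ε₃ ε₄ n).symm x ∈ N := by
    apply key
    refine ⟨((Φ ε₁ ε₂ ε₃ ε₄ n).symm g)⁻¹, ?_⟩
    have h0 : r = (Φ ε₁ ε₂ ε₃ ε₄ n).symm g * (Φ ε₁ ε₂ ε₃ ε₄ n).symm r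
        * ((Φ ε₁ ε₂ ε₃ ε₄ n).symm g)⁻¹ := by
      conv_lhs => rw [show r = (Φ ε₁ ε₂ ε₃ ε₄ n).symm ((Φ ε₁ ε₂ ε₃ ε₄ n) r) from
        ((Φ ε₁ ε₂ ε₃ ε₄ n).symm_apply_apply r).symm]
      rw [hg]; simp [map_mul]
    conv_rhs => rw [h0]
    group
  have hmap : N.map (Φ ε₁ ε₂ ε₃ ε₄ n).toMonoidHom = N := by
    apply le_antisymm
    · rintro _ ⟨x, hx, rfl⟩
      exact fwd x hx
    · intro x hx
      exact ⟨(Φ ε₁ ε₂ ε₃ ε₄ n).symm x, bwd x hx, by simp⟩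
  refine ⟨hconj, fwd, ?_⟩
  haveI : N.Normal := Subgroup.normalClosure_normal
  refine ⟨QuotientGroup.congr N N (Φ ε₁ ε₂ ε₃ ε₄ n) hmap, fun x => rfl⟩
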